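/- Suppose γ ∈ [σ,ρ]_L and i ∉ Des_L(γ). Then s_iγ ∈ [σ,ρ]_L if and only if i ∉ Des_L(γ ρ^{-1} w_0). -/

import Mathlib

open scoped Classical

noncomputable section

/-- The symmetric group `S_{n+1}` (the paper's `S_n` with `n = n+1`). -/
abbrev SG (n : ℕ) := Equiv.Perm (Fin (n + 1))

/-- The simple transposition `s_{i+1}` (adjacent transposition swapping `i` and `i+1`,
0-indexed). -/
def sgen {n : ℕ} (i : Fin n) : SG n := Equiv.swap i.castSucc i.succ

/-- Coxeter length of a permutation, i.e. its number of inversions. -/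
def len {n : ℕ} (σ : SG n) : ℕ :=
  (Finset.univ.filter fun p : Fin (n + 1) × Fin (n + 1) => p.1 < p.2 ∧ σ p.2 < σ p.1).card

/-- The left weak Bruhat order on `S_{n+1}`. -/
def leL {n : ℕ} (σ ρ : SG n) : Prop := ∃ γ, ρ = γ * σ ∧ len ρ = len σ + len γ

/-- Left descent set. -/
def DesL {n : ℕ} (σ : SG n) : Set (Fin n) := {i | len (sgen i * σ) < len σ}

/-- Right descent set. -/
def DesR {n : ℕ} (σ : SG n) : Set (Fin n) := {i | len (σ * sgen i) < len σ}

/-- The longest element `w₀` of `S_{n+1}`. -/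
def w0 {n : ℕ} : SG n := ⟨Fin.rev, Fin.rev, Fin.rev_rev, Fin.rev_rev⟩

lemma len_one {n : ℕ} : len (1 : SG n) = 0 := by
  unfold len
  rw [Finset.card_eq_zero, Finset.eq_empty_iff_forall_notMem]
  rintro p hp
  rw [Finset.mem_filter] at hp
  obtain ⟨-, h1, h2⟩ := hp
  simp only [Equiv.Perm.one_apply] at h2
  exact absurd (h1.trans h2) (lt_irrefl _)

lemma leL_refl {n : ℕ} (σ : SG n) : leL σ σ :=
  ⟨1, (one_mul σ).symm, by simp [len_one]⟩

/-- The defining relations of the 0-Hecke algebra `H_{n+1}(0)`. -/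
inductive HRel (n : ℕ) : FreeAlgebra ℂ (Fin n) → FreeAlgebra ℂ (Fin n) → Prop
  | idem (i : Fin n) :
      HRel n (FreeAlgebra.ι ℂ i * FreeAlgebra.ι ℂ i) (FreeAlgebra.ι ℂ i)
  | braid (i j : Fin n) (h : (i : ℕ) + 1 = j) :
      HRel n (FreeAlgebra.ι ℂ i * FreeAlgebra.ι ℂ j * FreeAlgebra.ι ℂ i)
             (FreeAlgebra.ι ℂ j * FreeAlgebra.ι ℂ i * FreeAlgebra.ι ℂ j)
  | comm (i j : Fin n) (h : (i : ℕ) + 2 ≤ j) :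
      HRel n (FreeAlgebra.ι ℂ i * FreeAlgebra.ι ℂ j) (FreeAlgebra.ι ℂ j * FreeAlgebra.ι ℂ i)

/-- The 0-Hecke algebra `H_{n+1}(0)` over `ℂ`. -/
abbrev Hecke (n : ℕ) := RingQuot (HRel n)

/-- The generator `π_{i+1}` of the 0-Hecke algebra. -/
def hpi {n : ℕ} (i : Fin n) : Hecke n :=
  RingQuot.mkAlgHom ℂ (HRel n) (FreeAlgebra.ι ℂ i)

/-- The element `π̄_{i+1} = π_{i+1} - 1`. -/
def hpibar {n : ℕ} (i : Fin n) : Hecke n := hpi i - 1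

/-- `l` is a reduced word for `σ`. -/
def IsReducedWord {n : ℕ} (l : List (Fin n)) (σ : SG n) : Prop :=
  (l.map sgen).prod = σ ∧ l.length = len σ

/-- `π_σ`, the product of the generators `π_i` along a reduced word for `σ`. -/
noncomputable def piPerm {n : ℕ} (σ : SG n) : Hecke n :=
  if h : ∃ l : List (Fin n), IsReducedWord l σ then ((h.choose.map hpi).prod) else 0

/-- `π̄_σ`, the product of the elements `π̄_i` along a reduced word for `σ`. -/
noncomputable def pibarPerm {n : ℕ} (σ : SG n) : Hecke n :=
  if h : ∃ l : List (Fin n), IsReducedWord l σ then ((h.choose.map hpibar).prod) else 0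

/-- The left weak Bruhat interval `[σ,ρ]_L`. -/
abbrev Itv {n : ℕ} (σ ρ : SG n) := {γ : SG n // leL σ γ ∧ leL γ ρ}

/-- The action of the generator `π_{i+1}` on a basis element of `ℂ[σ,ρ]_L`. -/
noncomputable def bpiFun {n : ℕ} (σ ρ : SG n) (i : Fin n) (γ : Itv σ ρ) :
    Itv σ ρ →₀ ℂ :=
  if i ∈ DesL γ.1 then Finsupp.single γ 1
  else if h : leL σ (sgen i * γ.1) ∧ leL (sgen i * γ.1) ρ then
    Finsupp.single ⟨sgen i * γ.1, h⟩ 1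
  else 0

/-- The operator `𝛑_i` on `ℂ[σ,ρ]_L` (the action of `π_{i+1}` on `B(σ,ρ)`). -/
noncomputable def bpi {n : ℕ} (σ ρ : SG n) (i : Fin n) :
    (Itv σ ρ →₀ ℂ) →ₗ[ℂ] (Itv σ ρ →₀ ℂ) :=
  Finsupp.lift _ ℂ _ (bpiFun σ ρ i)

/-- The action of `π̄_{i+1}` on a basis element of the module `B̄(σ,ρ)`. -/
noncomputable def bbarFun {n : ℕ} (σ ρ : SG n) (i : Fin n) (γ : Itv σ ρ) :
    Itv σ ρ →₀ ℂ :=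
  if i ∈ DesL γ.1 then -Finsupp.single γ 1
  else if h : leL σ (sgen i * γ.1) ∧ leL (sgen i * γ.1) ρ then
    Finsupp.single ⟨sgen i * γ.1, h⟩ 1
  else 0

/-- The operator giving the action of `π̄_{i+1}` on `B̄(σ,ρ)`. -/
noncomputable def bbar {n : ℕ} (σ ρ : SG n) (i : Fin n) :
    (Itv σ ρ →₀ ℂ) →ₗ[ℂ] (Itv σ ρ →₀ ℂ) :=
  Finsupp.lift _ ℂ _ (bbarFun σ ρ i)

-- ==== auxiliary development ====

variable {n : ℕ}

def invS (w : SG n) : Finset (Fin (n+1) × Fin (n+1)) :=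
  Finset.univ.filter fun p => p.1 < p.2 ∧ w p.2 < w p.1

lemma len_eq_card (w : SG n) : len w = (invS w).card := rfl

lemma mem_invS {w : SG n} {p q : Fin (n+1)} :
    (p, q) ∈ invS w ↔ p < q ∧ w q < w p := by
  simp [invS]

lemma swap_lt_swap_iff (i : Fin n) (u v : Fin (n+1)) :
    Equiv.swap i.castSucc i.succ v < Equiv.swap i.castSucc i.succ u ↔
      ((u = i.castSucc ∧ v = i.succ) ∨ (v < u ∧ ¬(u = i.succ ∧ v = i.castSucc))) := by
  simp only [Equiv.swap_apply_def]
  split_ifs <;>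
    simp only [Fin.lt_def, Fin.ext_iff, Fin.coe_castSucc, Fin.val_succ, not_and, not_lt,
      and_imp] at * <;>
    omega


end

noncomputable section
variable {n : ℕ}

lemma mem_invS_sgen_mul {w : SG n} {i : Fin n} {p q : Fin (n+1)} :
    (p, q) ∈ invS (sgen i * w) ↔
      ((p = w⁻¹ i.castSucc ∧ q = w⁻¹ i.succ) ∧ p < q) ∨
      ((p, q) ∈ invS w ∧ ¬(p = w⁻¹ i.succ ∧ q = w⁻¹ i.castSucc)) := by
  have happ : ∀ x, (sgen i * w) x = Equiv.swap i.castSucc i.succ (w x) := fun x => rfl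
  have hiff : ∀ (x : Fin (n+1)) (y : Fin (n+1)), w x = y ↔ x = w⁻¹ y := by
    intro x y
    constructor
    · rintro rfl; simp
    · rintro rfl; simp
  rw [mem_invS, mem_invS, happ, happ, swap_lt_swap_iff, hiff, hiff, hiff, hiff]
  tauto

lemma invS_sgen_mul_of_lt {w : SG n} {i : Fin n} (h : w⁻¹ i.castSucc < w⁻¹ i.succ) :
    invS (sgen i * w) = insert (w⁻¹ i.castSucc, w⁻¹ i.succ) (invS w) := by
  ext ⟨p, q⟩
  rw [mem_invS_sgen_mul, Finset.mem_insert, Prod.mk.injEq]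
  constructor
  · rintro (⟨⟨rfl, rfl⟩, -⟩ | ⟨hm, -⟩)
    · exact Or.inl ⟨rfl, rfl⟩
    · exact Or.inr hm
  · rintro (⟨rfl, rfl⟩ | hm)
    · exact Or.inl ⟨⟨rfl, rfl⟩, h⟩
    · refine Or.inr ⟨hm, ?_⟩
      rintro ⟨rfl, rfl⟩
      exact absurd ((mem_invS.1 hm).1) (not_lt.2 h.le)

lemma invS_sgen_mul_of_gt {w : SG n} {i : Fin n} (h : w⁻¹ i.succ < w⁻¹ i.castSucc) :
    invS (sgen i * w) = (invS w).erase (w⁻¹ i.succ, w⁻¹ i.castSucc) := by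
  ext ⟨p, q⟩
  rw [mem_invS_sgen_mul, Finset.mem_erase, Ne, Prod.mk.injEq]
  constructor
  · rintro (⟨⟨rfl, rfl⟩, hpq⟩ | ⟨hm, hne⟩)
    · exact absurd hpq (not_lt.2 h.le)
    · exact ⟨fun he => hne ⟨he.1, he.2⟩, hm⟩
  · rintro ⟨hne, hm⟩
    exact Or.inr ⟨hm, fun he => hne ⟨he.1, he.2⟩⟩

lemma castSucc_pair_not_mem_invS (w : SG n) (i : Fin n) :
    (w⁻¹ i.castSucc, w⁻¹ i.succ) ∉ invS w := by
  rw [mem_invS]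
  rintro ⟨-, hlt⟩
  simp only [Equiv.Perm.inv_def, Equiv.apply_symm_apply] at hlt
  exact absurd ((Fin.castSucc_lt_succ (i := i)).trans hlt) (lt_irrefl _)

lemma succ_pair_mem_invS {w : SG n} {i : Fin n} (h : w⁻¹ i.succ < w⁻¹ i.castSucc) :
    (w⁻¹ i.succ, w⁻¹ i.castSucc) ∈ invS w := by
  rw [mem_invS]
  refine ⟨h, ?_⟩
  simp only [Equiv.Perm.inv_def, Equiv.apply_symm_apply]
  exact Fin.castSucc_lt_succ (i := i)

lemma len_sgen_mul_of_lt {w : SG n} {i : Fin n} (h : w⁻¹ i.castSucc < w⁻¹ i.succ) :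
    len (sgen i * w) = len w + 1 := by
  rw [len_eq_card, len_eq_card, invS_sgen_mul_of_lt h,
    Finset.card_insert_of_notMem (castSucc_pair_not_mem_invS w i)]

lemma len_sgen_mul_of_gt {w : SG n} {i : Fin n} (h : w⁻¹ i.succ < w⁻¹ i.castSucc) :
    len (sgen i * w) + 1 = len w := by
  rw [len_eq_card, len_eq_card, invS_sgen_mul_of_gt h,
    Finset.card_erase_of_mem (succ_pair_mem_invS h)]
  have := Finset.card_pos.2 ⟨_, succ_pair_mem_invS h⟩
  omega

lemma inv_ne (w : SG n) (i : Fin n) : w⁻¹ i.castSucc ≠ w⁻¹ i.succ := by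
  intro h
  exact absurd (w⁻¹.injective h) (Fin.castSucc_lt_succ (i := i)).ne

lemma desL_iff {w : SG n} {i : Fin n} :
    i ∈ DesL w ↔ w⁻¹ i.succ < w⁻¹ i.castSucc := by
  rcases lt_or_gt_of_ne (inv_ne w i) with h | h
  · simp only [DesL, Set.mem_setOf_eq, len_sgen_mul_of_lt h]
    omega
  · simp only [DesL, Set.mem_setOf_eq, ← len_sgen_mul_of_gt h]
    omega

lemma len_sgen_mul_le (w : SG n) (i : Fin n) : len (sgen i * w) ≤ len w + 1 := by
  rcases lt_or_gt_of_ne (inv_ne w i) with h | h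
  · rw [len_sgen_mul_of_lt h]
  · rw [← len_sgen_mul_of_gt h]; omega

lemma sgen_mul_cancel (i : Fin n) (w : SG n) : sgen i * (sgen i * w) = w := by
  rw [← mul_assoc, sgen, Equiv.swap_mul_self, one_mul]

end

noncomputable section
variable {n : ℕ}

lemma strictMono_perm_eq_one {w : SG n} (h : StrictMono w) : w = 1 := by
  have hr : Set.range w = Set.range (id : Fin (n+1) → Fin (n+1)) := by
    simp [w.surjective.range_eq]
  have hwf : WellFoundedLT (Fin (n+1)) := inferInstance
  have h2 : ⇑w = id :=
    (@StrictMono.range_inj (Fin (n+1)) (Fin (n+1)) _ _ hwf ⇑w id h strictMono_id).1 hr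
  exact Equiv.ext fun x => congrFun h2 x

lemma exists_desL {x : SG n} (hx : x ≠ 1) :
    ∃ j : Fin n, x⁻¹ j.succ < x⁻¹ j.castSucc := by
  by_contra hcon
  push_neg at hcon
  have hmono : StrictMono (⇑x⁻¹) := by
    rw [Fin.strictMono_iff_lt_succ]
    intro j
    exact (hcon j).lt_of_ne (inv_ne x j)
  have : x⁻¹ = 1 := strictMono_perm_eq_one hmono
  exact hx (by rw [← inv_inv x, this, inv_one])

lemma len_zero_eq_one {w : SG n} (h : len w = 0) : w = 1 := by
  apply strictMono_perm_eq_one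
  intro p q hpq
  rcases lt_trichotomy (w p) (w q) with h' | h' | h'
  · exact h'
  · exact absurd (w.injective h') hpq.ne
  · exfalso
    have : (p, q) ∈ invS w := mem_invS.2 ⟨hpq, h'⟩
    rw [len_eq_card, Finset.card_eq_zero] at h
    simp [h] at this

lemma len_mul_le_aux (N : ℕ) :
    ∀ x y : SG n, len x ≤ N → len (x * y) ≤ len x + len y := by
  induction N with
  | zero =>
    intro x y hx
    have : x = 1 := len_zero_eq_one (Nat.le_zero.1 hx)
    simp [this, len_one]
  | succ N ih =>
    intro x y hx
    by_cases h1 : x = 1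
    · simp [h1, len_one]
    · obtain ⟨j, hj⟩ := exists_desL h1
      set x' := sgen j * x with hx'
      have hlen : len x' + 1 = len x := len_sgen_mul_of_gt hj
      have hxx : x = sgen j * x' := (sgen_mul_cancel j x).symm
      calc len (x * y) = len (sgen j * (x' * y)) := by rw [hxx, mul_assoc]
        _ ≤ len (x' * y) + 1 := len_sgen_mul_le _ _
        _ ≤ len x' + len y + 1 := by
            have := ih x' y (by omega)
            omega
        _ = len x + len y := by omega

lemma len_mul_le (x y : SG n) : len (x * y) ≤ len x + len y :=
  len_mul_le_aux (len x) x y le_rfl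

lemma leL_subset_aux (N : ℕ) :
    ∀ σ γ : SG n, len (γ * σ) = len σ + len γ → len γ ≤ N →
      invS σ ⊆ invS (γ * σ) := by
  induction N with
  | zero =>
    intro σ γ _ hγ
    have : γ = 1 := len_zero_eq_one (Nat.le_zero.1 hγ)
    simp [this]
  | succ N ih =>
    intro σ γ hlen hγN
    by_cases h1 : γ = 1
    · simp [h1]
    · obtain ⟨j, hj⟩ := exists_desL h1
      set γ' := sgen j * γ with hγ'
      have hlen' : len γ' + 1 = len γ := len_sgen_mul_of_gt hj
      have hγγ : γ = sgen j * γ' := (sgen_mul_cancel j γ).symm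
      have hsub : len (γ' * σ) ≤ len σ + len γ' := by
        have h1 := len_mul_le γ' σ; omega
      have hge : len (γ * σ) ≤ len (γ' * σ) + 1 := by
        rw [hγγ, mul_assoc]; exact len_sgen_mul_le _ _
      have heq : len (γ' * σ) = len σ + len γ' := by omega
      have hstep : invS σ ⊆ invS (γ' * σ) := ih σ γ' heq (by omega)
      have hmul : γ * σ = sgen j * (γ' * σ) := by rw [hγγ, mul_assoc]
      rcases lt_or_gt_of_ne (inv_ne (γ' * σ) j) with hc | hc
      · rw [hmul, invS_sgen_mul_of_lt hc]
        exact hstep.trans (Finset.subset_insert _ _)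
      · exfalso
        have h2 := len_sgen_mul_of_gt hc
        rw [← hmul] at h2
        omega

lemma leL_subset {σ ρ : SG n} (h : leL σ ρ) : invS σ ⊆ invS ρ := by
  obtain ⟨γ, rfl, hlen⟩ := h
  exact leL_subset_aux (len γ) σ γ hlen le_rfl

end

noncomputable section
variable {n : ℕ}

lemma invS_inj {τ ρ : SG n} (h : invS τ = invS ρ) : τ = ρ := by
  have hsm : StrictMono ⇑(τ * ρ⁻¹) := by
    intro x y hxy
    have happ : ∀ z, (τ * ρ⁻¹) z = τ (ρ⁻¹ z) := fun z => rfl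
    rw [happ, happ]
    set p := ρ⁻¹ x with hp
    set q := ρ⁻¹ y with hq
    have hpq : p ≠ q := fun he => hxy.ne (by
      have := congrArg ρ he
      simpa [hp, hq] using this)
    have hρp : ρ p = x := by simp [hp]
    have hρq : ρ q = y := by simp [hq]
    have hτ : τ q ≠ τ p := fun he => hpq (τ.injective he.symm)
    rcases hpq.lt_or_gt with hlt | hlt
    · have : (p, q) ∉ invS ρ := by
        rw [mem_invS]
        rintro ⟨-, hbad⟩
        rw [hρp, hρq] at hbad
        exact absurd (hbad.trans hxy) (lt_irrefl _)
      rw [← h, mem_invS] at this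
      push_neg at this
      exact lt_of_le_of_ne (this hlt) hτ.symm
    · have : (q, p) ∈ invS ρ := mem_invS.2 ⟨hlt, by rw [hρp, hρq]; exact hxy⟩
      rw [← h, mem_invS] at this
      exact this.2
  have h1 : τ * ρ⁻¹ = 1 := strictMono_perm_eq_one hsm
  have := congrArg (· * ρ) h1
  simpa [mul_assoc] using this

lemma gap_lemma {τ ρ : SG n} (hsub : invS τ ⊆ invS ρ) (hne : τ ≠ ρ) :
    ∃ j : Fin n, ρ⁻¹ j.succ < ρ⁻¹ j.castSucc ∧
      (ρ⁻¹ j.succ, ρ⁻¹ j.castSucc) ∉ invS τ := by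
  classical
  set D := invS ρ \ invS τ with hD
  have hDne : D.Nonempty := by
    rw [Finset.sdiff_nonempty]
    intro hc
    exact hne (invS_inj (Finset.Subset.antisymm hsub hc))
  obtain ⟨⟨p, q⟩, hmem, hmin⟩ :=
    Finset.exists_min_image D (fun pq => (ρ pq.1).val - (ρ pq.2).val) hDne
  rw [hD, Finset.mem_sdiff, mem_invS] at hmem
  obtain ⟨⟨hpq, hval⟩, hnotτ⟩ := hmem
  -- claim: values are adjacent
  have hadj : (ρ p).val = (ρ q).val + 1 := by
    by_contra hgap
    have hv : (ρ q).val + 1 < (ρ p).val := by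
      have := hval; rw [Fin.lt_def] at this; omega
    set v : Fin (n+1) := ⟨(ρ q).val + 1, by omega⟩ with hvdef
    have hvq : ρ q < v := by rw [Fin.lt_def]; simp [hvdef]
    have hvp : v < ρ p := by rw [Fin.lt_def]; simpa [hvdef] using hv
    set r := ρ⁻¹ v with hr
    have hρr : ρ r = v := by simp [hr]
    have hrp : r ≠ p := by
      intro he; rw [he] at hρr; exact hvp.ne hρr.symm
    have hrq : r ≠ q := by
      intro he; rw [he] at hρr; exact hvq.ne hρr
    have hvalrq : (ρ r).val - (ρ q).val < (ρ p).val - (ρ q).val := by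
      rw [hρr]; simp only [hvdef]; omega
    have hvalpr : (ρ p).val - (ρ r).val < (ρ p).val - (ρ q).val := by
      rw [hρr]; simp only [hvdef]; omega
    have hsmaller : ∀ a b : Fin (n+1), a < b → ρ b < ρ a →
        (a, b) ∉ invS τ → (ρ a).val - (ρ b).val < (ρ p).val - (ρ q).val → False := by
      intro a b hab hba hnot hlt
      have hm : (a, b) ∈ D := by
        rw [hD, Finset.mem_sdiff, mem_invS]
        exact ⟨⟨hab, hba⟩, hnot⟩
      have := hmin _ hm
      simp only at this
      omega
    have hτpq : ¬ τ q < τ p := fun hc => hnotτ (mem_invS.2 ⟨hpq, hc⟩)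
    rcases lt_trichotomy r p with hc1 | hc1 | hc1
    · -- r < p < q : use (r, q)
      have hnrp : (r, p) ∉ invS τ := by
        intro hc
        have h2 := hsub hc
        rw [mem_invS, hρr] at h2
        exact absurd (h2.2.trans hvp) (lt_irrefl _)
      have hτrp : ¬ τ p < τ r := fun hc => hnrp (mem_invS.2 ⟨hc1, hc⟩)
      have hnot : (r, q) ∉ invS τ := by
        intro hc
        rw [mem_invS] at hc
        exact hτpq (lt_of_lt_of_le hc.2 (not_lt.1 hτrp))
      exact hsmaller r q (hc1.trans hpq) (by rw [hρr]; exact hvq) hnot hvalrq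
    · exact hrp hc1
    · rcases lt_trichotomy r q with hc2 | hc2 | hc2
      · -- p < r < q : one of (p, r), (r, q) works
        by_cases hτ1 : (p, r) ∈ invS τ
        · have hτ2 : (r, q) ∉ invS τ := by
            intro hc
            rw [mem_invS] at hτ1 hc
            exact hτpq (hc.2.trans hτ1.2)
          exact hsmaller r q hc2 (by rw [hρr]; exact hvq) hτ2 hvalrq
        · exact hsmaller p r hc1 (by rw [hρr]; exact hvp) hτ1 hvalpr
      · exact hrq hc2
      · -- q < r : use (p, r)
        have hnqr : (q, r) ∉ invS τ := by
          intro hc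
          have h2 := hsub hc
          rw [mem_invS, hρr] at h2
          exact absurd (hvq.trans h2.2) (lt_irrefl _)
        have hτqr : ¬ τ r < τ q := fun hc => hnqr (mem_invS.2 ⟨hc2, hc⟩)
        have hnot : (p, r) ∉ invS τ := by
          intro hc
          rw [mem_invS] at hc
          exact hτpq (lt_of_le_of_lt (not_lt.1 hτqr) hc.2)
        exact hsmaller p r (hpq.trans hc2) (by rw [hρr]; exact hvp) hnot hvalpr
  -- build j
  have hlt : (ρ q).val < n := by
    have := (ρ p).isLt; omega
  have h1 : (⟨(ρ q).val, hlt⟩ : Fin n).castSucc = ρ q := by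
    ext; simp
  have h2 : (⟨(ρ q).val, hlt⟩ : Fin n).succ = ρ p := by
    ext; simp [hadj.symm]
  refine ⟨⟨(ρ q).val, hlt⟩, ?_, ?_⟩
  · rw [h1, h2]
    simpa using hpq
  · rw [h1, h2]
    simpa using hnotτ

end

noncomputable section
variable {n : ℕ}

lemma subset_leL_aux (N : ℕ) :
    ∀ τ ρ : SG n, invS τ ⊆ invS ρ → len ρ ≤ N → leL τ ρ := by
  induction N with
  | zero =>
    intro τ ρ hsub hρ
    have hρ1 : ρ = 1 := len_zero_eq_one (Nat.le_zero.1 hρ)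
    have hτ1 : τ = 1 := by
      apply len_zero_eq_one
      rw [len_eq_card]
      have : invS τ = ∅ := by
        rw [← Finset.subset_empty]
        have : invS ρ = ∅ := by
          rw [← Finset.card_eq_zero, ← len_eq_card]
          exact Nat.le_zero.1 hρ
        rwa [this] at hsub
      simp [this]
    rw [hρ1, hτ1]
    exact leL_refl 1
  | succ N ih =>
    intro τ ρ hsub hρ
    by_cases hne : τ = ρ
    · rw [hne]; exact leL_refl ρ
    · obtain ⟨j, hj, hjτ⟩ := gap_lemma hsub hne
      set ρ' := sgen j * ρ with hρ'
      have hlen' : len ρ' + 1 = len ρ := len_sgen_mul_of_gt hj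
      have hinv' : invS ρ' = (invS ρ).erase (ρ⁻¹ j.succ, ρ⁻¹ j.castSucc) :=
        invS_sgen_mul_of_gt hj
      have hsub' : invS τ ⊆ invS ρ' := by
        rw [hinv']
        intro x hx
        rw [Finset.mem_erase]
        exact ⟨fun he => hjτ (he ▸ hx), hsub hx⟩
      obtain ⟨β, hβ, hβlen⟩ := ih τ ρ' hsub' (by omega)
      refine ⟨sgen j * β, ?_, ?_⟩
      · rw [mul_assoc, ← hβ, hρ', sgen_mul_cancel]
      · have hρρ : ρ = sgen j * ρ' := (sgen_mul_cancel j ρ).symm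
        have h1 : len (sgen j * β * τ) ≤ len (sgen j * β) + len τ := len_mul_le _ _
        have h2 : len (sgen j * β) ≤ len β + 1 := len_sgen_mul_le _ _
        have h3 : ρ = sgen j * β * τ := by rw [mul_assoc, ← hβ, hρ', sgen_mul_cancel]
        rw [← h3] at h1
        omega

lemma leL_iff_subset {τ ρ : SG n} : leL τ ρ ↔ invS τ ⊆ invS ρ :=
  ⟨leL_subset, fun h => subset_leL_aux (len ρ) τ ρ h le_rfl⟩

end

noncomputable section


/-- For `γ ∈ [σ,ρ]_L` and `i ∉ Des_L(γ)`:  `s_i γ ∈ [σ,ρ]_L` iff `i ∉ Des_L(γ ρ⁻¹ w₀)`. -/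
theorem stmt9 (n : ℕ) (σ ρ γ : SG n) (hγ : leL σ γ ∧ leL γ ρ) (i : Fin n)
    (hi : i ∉ DesL γ) :
    (leL σ (sgen i * γ) ∧ leL (sgen i * γ) ρ) ↔ i ∉ DesL (γ * ρ⁻¹ * w0) := by
  set a := γ⁻¹ i.castSucc with ha
  set b := γ⁻¹ i.succ with hb
  have hab : a < b := by
    rcases lt_or_gt_of_ne (inv_ne γ i) with h | h
    · exact h
    · exact absurd (desL_iff.2 h) hi
  have hσγ : invS σ ⊆ invS γ := leL_subset hγ.1
  have hγρ : invS γ ⊆ invS ρ := leL_subset hγ.2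
  have hins : invS (sgen i * γ) = insert (a, b) (invS γ) := invS_sgen_mul_of_lt hab
  have hρab : ρ a ≠ ρ b := fun he => hab.ne (ρ.injective he)
  -- right side computation
  have hinvδ : ∀ x : Fin (n+1), (γ * ρ⁻¹ * (w0 (n := n)))⁻¹ x = Fin.rev (ρ (γ⁻¹ x)) := by
    intro x
    simp [mul_inv_rev, Equiv.Perm.mul_apply, w0]
  have hdes : i ∈ DesL (γ * ρ⁻¹ * w0) ↔ ρ a < ρ b := by
    rw [desL_iff, hinvδ, hinvδ, ← ha, ← hb]
    exact Fin.rev_lt_rev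
  have hR : (i ∉ DesL (γ * ρ⁻¹ * w0)) ↔ ρ b < ρ a := by
    rw [hdes]
    constructor
    · intro h
      exact (not_lt.1 h).lt_of_ne hρab.symm
    · intro h hc
      exact absurd (h.trans hc) (lt_irrefl _)
  rw [hR]
  constructor
  · rintro ⟨-, h2⟩
    have := leL_iff_subset.1 h2
    rw [hins] at this
    have hm : (a, b) ∈ invS ρ := this (Finset.mem_insert_self _ _)
    exact (mem_invS.1 hm).2
  · intro h
    constructor
    · rw [leL_iff_subset, hins]
      exact hσγ.trans (Finset.subset_insert _ _)
    · rw [leL_iff_subset, hins, Finset.insert_subset_iff]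
      exact ⟨mem_invS.2 ⟨hab, h⟩, hγρ⟩

end
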